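/- arXiv:2002.00233 — 4 statements merged into one kernel-verified Lean document; each statement's English description precedes it below -/
import Mathlib

section
/- Let K be an algebraically closed field of characteristic zero (in the paper, K is the algebraic closure of the field ℚ_l of l-adic numbers). For every natural number n ≠ 2, the K-linear span of the special orthogonal group SO_n(K) = {A ∈ M_{n×n}(K) : Aᵀ·A = 1 and det A = 1} is the full matrix algebra M_{n×n}(K). -/
open Matrix Pointwise

section SpanSOAux

variable {K : Type*} [Field K] [CharZero K] {n : ℕ}

private lemma spanSO_one_mem :
    (1 : Matrix (Fin n) (Fin n) K) ∈
      {A : Matrix (Fin n) (Fin n) K | Aᵀ * A = 1 ∧ A.det = 1} := by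
  constructor <;> simp

private lemma spanSO_diag_mem (i j : Fin n) (hij : i ≠ j) :
    Matrix.diagonal (fun k => if k = i ∨ k = j then (-1 : K) else 1) ∈
      {A : Matrix (Fin n) (Fin n) K | Aᵀ * A = 1 ∧ A.det = 1} := by
  constructor
  · rw [Matrix.diagonal_transpose, Matrix.diagonal_mul_diagonal]
    convert Matrix.diagonal_one using 2
    ext k
    split_ifs <;> ring
  · rw [Matrix.det_diagonal]
    have : (fun k => if k = i ∨ k = j then (-1 : K) else 1) =
        fun k => (if k = i then (-1 : K) else 1) * (if k = j then (-1 : K) else 1) := by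
      ext k
      rcases eq_or_ne k i with h | h <;> rcases eq_or_ne k j with h' | h' <;>
        simp_all
    rw [this, Finset.prod_mul_distrib, Finset.prod_ite_eq', Finset.prod_ite_eq']
    simp

private lemma spanSO_rot_mem (i j : Fin n) (hij : i ≠ j) :
    ((Equiv.swap i j).toPEquiv.toMatrix *
        Matrix.diagonal (fun k => if k = i then (-1 : K) else 1)) ∈
      {A : Matrix (Fin n) (Fin n) K | Aᵀ * A = 1 ∧ A.det = 1} := by
  set σ := Equiv.swap i j
  set D : Matrix (Fin n) (Fin n) K := Matrix.diagonal (fun k => if k = i then (-1 : K) else 1)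
  have hDT : Dᵀ = D := Matrix.diagonal_transpose _
  have hST : (σ.toPEquiv.toMatrix : Matrix (Fin n) (Fin n) K)ᵀ = σ.symm.toPEquiv.toMatrix := by
    rw [Equiv.toPEquiv_symm, PEquiv.toMatrix_symm]
  constructor
  · rw [Matrix.transpose_mul, hDT, hST]
    have hSS : (σ.symm.toPEquiv.toMatrix : Matrix (Fin n) (Fin n) K) * σ.toPEquiv.toMatrix = 1 := by
      rw [← PEquiv.toMatrix_trans, ← Equiv.toPEquiv_trans, Equiv.symm_trans_self,
        Equiv.toPEquiv_refl, PEquiv.toMatrix_refl]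
    calc D * σ.symm.toPEquiv.toMatrix * (σ.toPEquiv.toMatrix * D)
        = D * (σ.symm.toPEquiv.toMatrix * σ.toPEquiv.toMatrix) * D := by
          simp only [Matrix.mul_assoc]
      _ = D * D := by rw [hSS, Matrix.mul_one]
      _ = 1 := by
          rw [Matrix.diagonal_mul_diagonal]
          convert Matrix.diagonal_one using 2
          ext k
          split_ifs <;> ring
  · rw [Matrix.det_mul, Matrix.det_diagonal, Finset.prod_ite_eq']
    have : Matrix.det (σ.toPEquiv.toMatrix : Matrix (Fin n) (Fin n) K) = Equiv.Perm.sign σ :=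
      Matrix.det_permutation σ
    rw [this, Equiv.Perm.sign_swap hij]
    simp

private lemma spanSO_key1 (i j : Fin n) (hij : i ≠ j) :
    single i i (1 : K) + single j j 1 =
      (2 : K)⁻¹ • ((1 : Matrix (Fin n) (Fin n) K) -
        Matrix.diagonal (fun k => if k = i ∨ k = j then (-1 : K) else 1)) := by
  ext a b
  simp only [Matrix.add_apply, Matrix.sub_apply, Matrix.smul_apply, Matrix.one_apply,
    Matrix.diagonal_apply, Matrix.single, Matrix.of_apply, smul_eq_mul]
  split_ifs <;> first | (norm_num; done) | (exfalso; subst_vars; grind)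

private lemma spanSO_key2 (i j : Fin n) (hij : i ≠ j) :
    single i j (1 : K) - single j i 1 =
      ((Equiv.swap i j).toPEquiv.toMatrix *
          Matrix.diagonal (fun k => if k = i then (-1 : K) else 1)) -
        (1 : Matrix (Fin n) (Fin n) K) +
        (single i i (1 : K) + single j j 1) := by
  rw [PEquiv.toMatrix_toPEquiv_mul]
  ext a b
  simp only [Matrix.add_apply, Matrix.sub_apply, Matrix.one_apply,
    Matrix.diagonal_apply, Matrix.single, Matrix.of_apply,
    Matrix.submatrix_apply, id_eq, Equiv.swap_apply_def]
  split_ifs <;> first | (norm_num; done) | (exfalso; subst_vars; grind)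

end SpanSOAux

/-- **Sublemma 4.6 (span_On).** For an algebraically closed field `K` of characteristic zero
and every natural number `n ≠ 2`, the `K`-linear span of
`SO_n(K) = {A | Aᵀ ⬝ A = 1 ∧ det A = 1}` is the full matrix algebra `M_{n×n}(K)`. -/
theorem span_SO_eq_top (K : Type*) [Field K] [IsAlgClosed K] [CharZero K]
    (n : ℕ) (hn : n ≠ 2) :
    Submodule.span K
      {A : Matrix (Fin n) (Fin n) K | Aᵀ * A = 1 ∧ A.det = 1} = ⊤ := by
  rcases n with _ | _ | _ | m
  · have : Subsingleton (Matrix (Fin 0) (Fin 0) K) := by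
      constructor; intro a b; ext i; exact absurd i.2 (by omega)
    exact Subsingleton.elim _ _
  · rw [eq_top_iff]
    intro A _
    have hA : A = A 0 0 • (1 : Matrix (Fin 1) (Fin 1) K) := by
      ext a b
      fin_cases a <;> fin_cases b <;> simp
    rw [hA]
    exact Submodule.smul_mem _ _ (Submodule.subset_span spanSO_one_mem)
  · exact absurd rfl hn
  · set s : Set (Matrix (Fin (m+3)) (Fin (m+3)) K) := {A | Aᵀ * A = 1 ∧ A.det = 1} with hs
    set S := Submodule.span K s with hS
    have hmuls : s * s ⊆ s := by
      rintro _ ⟨a, ha, b, hb, rfl⟩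
      refine ⟨?_, ?_⟩
      · rw [Matrix.transpose_mul, Matrix.mul_assoc, ← Matrix.mul_assoc aᵀ, ha.1,
          Matrix.one_mul, hb.1]
      · rw [Matrix.det_mul, ha.2, hb.2, one_mul]
    have hmul : ∀ x ∈ S, ∀ y ∈ S, x * y ∈ S := by
      intro x hx y hy
      have h1 : x * y ∈ S * S := Submodule.mul_mem_mul hx hy
      have h2 : S * S ≤ S := by
        rw [hS, Submodule.span_mul_span K s s]
        exact Submodule.span_mono hmuls
      exact h2 h1
    have h1S : (1 : Matrix (Fin (m+3)) (Fin (m+3)) K) ∈ S := Submodule.subset_span spanSO_one_mem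
    -- E i i + E j j ∈ S for i ≠ j
    have hEE : ∀ i j : Fin (m + 3), i ≠ j →
        (single i i (1 : K) + single j j 1) ∈ S := by
      intro i j hij
      have hD := Submodule.subset_span (R := K) (spanSO_diag_mem (K := K) i j hij)
      have key := spanSO_key1 (K := K) i j hij
      rw [key]
      exact S.smul_mem _ (S.sub_mem h1S hD)
    -- E i j - E j i ∈ S for i ≠ j
    have hskew : ∀ i j : Fin (m + 3), i ≠ j →
        (single i j (1 : K) - single j i 1) ∈ S := by
      intro i j hij
      have hP := Submodule.subset_span (R := K) (spanSO_rot_mem (K := K) i j hij)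
      have key := spanSO_key2 (K := K) i j hij
      rw [key]
      exact S.add_mem (S.sub_mem hP h1S) (hEE i j hij)
    -- all off-diagonal std basis matrices
    have hoff : ∀ i j : Fin (m + 3), i ≠ j → single i j (1 : K) ∈ S := by
      intro i j hij
      obtain ⟨k, hk⟩ : ∃ k : Fin (m + 3), k ∉ ({i, j} : Finset (Fin (m + 3))) := by
        by_contra h
        push_neg at h
        have huniv : (Finset.univ : Finset (Fin (m + 3))) ⊆ {i, j} := fun x _ => h x
        have := Finset.card_le_card huniv
        have h2 : ({i, j} : Finset (Fin (m + 3))).card ≤ 2 :=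
          le_trans (Finset.card_insert_le _ _) (by simp)
        simp [Finset.card_univ] at this
        omega
      simp only [Finset.mem_insert, Finset.mem_singleton, not_or] at hk
      obtain ⟨hki, hkj⟩ := hk
      have h1 := hskew i k (fun h => hki h.symm)
      have h2 := hskew k j hkj
      have key : single i j (1 : K) =
          (single i k (1 : K) - single k i 1) *
            (single k j (1 : K) - single j k 1) := by
        rw [sub_mul, mul_sub, mul_sub]
        rw [Matrix.single_mul_single_same, Matrix.single_mul_single_of_ne (h := hkj),
          Matrix.single_mul_single_of_ne (h := fun h => hki h.symm),
          Matrix.single_mul_single_of_ne (h := hij)]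
        simp
      rw [key]
      exact hmul _ h1 _ h2
    -- diagonal std basis matrices
    have hdiag : ∀ i : Fin (m + 3), single i i (1 : K) ∈ S := by
      intro i
      obtain ⟨k, hki⟩ : ∃ k : Fin (m + 3), k ≠ i :=
        Fintype.exists_ne_of_one_lt_card (by simp) i
      have key : single i i (1 : K) =
          single i k (1 : K) * single k i 1 := by
        rw [Matrix.single_mul_single_same, one_mul]
      rw [key]
      exact hmul _ (hoff i k (Ne.symm hki)) _ (hoff k i hki)
    -- conclude
    rw [eq_top_iff]
    intro A _
    rw [Matrix.matrix_eq_sum_single A]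
    refine Submodule.sum_mem _ fun i _ => Submodule.sum_mem _ fun j _ => ?_
    have : single i j (A i j) = A i j • single i j (1 : K) := by
      rw [Matrix.smul_single, smul_eq_mul, mul_one]
    rw [this]
    rcases eq_or_ne i j with rfl | hij
    · exact S.smul_mem _ (hdiag i)
    · exact S.smul_mem _ (hoff i j hij)
end

section
/- Let K be a field of characteristic zero and n a natural number. The K-linear span of the set {(A, (Aᵀ)⁻¹) : A ∈ GL_n(K)} inside M_{n×n}(K) × M_{n×n}(K) is the whole space M_{n×n}(K) × M_{n×n}(K). -/
open Matrix Polynomial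

/-- Every square matrix over an infinite field lies in the span of the invertible matrices. -/
lemma mem_span_isUnit_det (K : Type*) [Field K] [CharZero K] (n : ℕ)
    (M : Matrix (Fin n) (Fin n) K) :
    M ∈ Submodule.span K {A : Matrix (Fin n) (Fin n) K | IsUnit A.det} := by
  classical
  -- find `c` with `M + c • 1` invertible, using the characteristic polynomial of `-M`
  obtain ⟨c, hc⟩ : ∃ c : K, IsUnit (M + c • (1 : Matrix (Fin n) (Fin n) K)).det := by
    have hp : (-M).charpoly ≠ 0 := (Matrix.charpoly_monic (-M)).ne_zero
    obtain ⟨c, hc⟩ := Infinite.exists_notMem_finset ((-M).charpoly.roots.toFinset)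
    refine ⟨c, ?_⟩
    have hev : ((-M).charpoly).eval c ≠ 0 := by
      intro h
      exact hc (Multiset.mem_toFinset.mpr ((Polynomial.mem_roots'.mpr ⟨hp, h⟩)))
    have key : ((-M).charpoly).eval c = (M + c • (1 : Matrix (Fin n) (Fin n) K)).det := by
      rw [Matrix.charpoly, ← Polynomial.coe_evalRingHom, RingHom.map_det]
      congr 1
      ext i j
      by_cases hij : i = j
      · subst hij
        simp [Matrix.charmatrix_apply_eq, Matrix.one_apply, Matrix.smul_apply, add_comm]
      · simp [Matrix.charmatrix_apply_ne _ _ _ hij, Matrix.one_apply, hij,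
          Matrix.smul_apply]
    rw [key] at hev
    exact isUnit_iff_ne_zero.mpr hev
  by_cases hc0 : c = 0
  · subst hc0
    simp only [zero_smul, add_zero] at hc
    exact Submodule.subset_span hc
  · have h1 : (M + c • (1 : Matrix (Fin n) (Fin n) K)) ∈
        Submodule.span K {A : Matrix (Fin n) (Fin n) K | IsUnit A.det} :=
      Submodule.subset_span hc
    have h2 : (c • (1 : Matrix (Fin n) (Fin n) K)) ∈
        Submodule.span K {A : Matrix (Fin n) (Fin n) K | IsUnit A.det} := by
      refine Submodule.smul_mem _ c (Submodule.subset_span ?_)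
      simp [isUnit_iff_ne_zero]
    have := Submodule.sub_mem _ h1 h2
    simpa using this

/-- The spanning step in the CM case of Lemma 4.7 (span_algabg): over a field `K` of
characteristic zero, the `K`-linear span of the set of pairs `(A, (Aᵀ)⁻¹)` for `A ∈ GL_n(K)`
is all of `M_{n×n}(K) × M_{n×n}(K)`. -/
theorem span_pairs_transpose_inverse_eq_top (K : Type*) [Field K] [CharZero K] (n : ℕ) :
    Submodule.span K
      {p : Matrix (Fin n) (Fin n) K × Matrix (Fin n) (Fin n) K |
        ∃ A : Matrix (Fin n) (Fin n) K, IsUnit A.det ∧ p = (A, (Aᵀ)⁻¹)} = ⊤ := by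
  set Mat := Matrix (Fin n) (Fin n) K
  set S : Set (Mat × Mat) :=
    {p : Mat × Mat | ∃ A : Mat, IsUnit A.det ∧ p = (A, (Aᵀ)⁻¹)} with hS
  -- step 1: (A, 0) is in the span for each invertible A
  have h1 : ∀ A : Mat, IsUnit A.det → ((A, 0) : Mat × Mat) ∈ Submodule.span K S := by
    intro A hA
    have hAT : IsUnit Aᵀ.det := by rwa [Matrix.det_transpose]
    have h2A : IsUnit ((2 : K) • A).det := by
      rw [Matrix.det_smul]
      exact (IsUnit.pow _ (isUnit_iff_ne_zero.mpr (two_ne_zero))).mul hA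
    have hmem1 : ((A, (Aᵀ)⁻¹) : Mat × Mat) ∈ Submodule.span K S :=
      Submodule.subset_span ⟨A, hA, rfl⟩
    have hmem2 : (((2 : K) • A, (2 : K)⁻¹ • (Aᵀ)⁻¹) : Mat × Mat) ∈ Submodule.span K S := by
      have : ((((2 : K) • A)ᵀ)⁻¹ : Mat) = (2 : K)⁻¹ • (Aᵀ)⁻¹ := by
        rw [Matrix.transpose_smul]
        have := Matrix.inv_smul' (A := Aᵀ) (Units.mk0 (2 : K) two_ne_zero) hAT
        simpa [Units.smul_def] using this
      rw [← this]
      exact Submodule.subset_span ⟨(2 : K) • A, h2A, rfl⟩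
    have key : ((A, 0) : Mat × Mat) =
        ((2 : K) / 3) • (((2 : K) • A, (2 : K)⁻¹ • (Aᵀ)⁻¹) : Mat × Mat) +
        (-(1 : K) / 3) • ((A, (Aᵀ)⁻¹) : Mat × Mat) := by
      have e1 : ((2 : K) / 3) • ((2 : K) • A) + (-(1 : K) / 3) • A = A := by
        rw [smul_smul, ← add_smul]; norm_num
      have e2 : ((2 : K) / 3) • ((2 : K)⁻¹ • (Aᵀ)⁻¹) + (-(1 : K) / 3) • (Aᵀ)⁻¹ = 0 := by
        rw [smul_smul, ← add_smul]; norm_num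
      simp only [Prod.smul_mk, Prod.mk_add_mk, e1, e2]
    rw [key]
    exact Submodule.add_mem _ (Submodule.smul_mem _ _ hmem2) (Submodule.smul_mem _ _ hmem1)
  -- step 2: (0, B) is in the span for each invertible B
  have h2 : ∀ B : Mat, IsUnit B.det → ((0, B) : Mat × Mat) ∈ Submodule.span K S := by
    intro B hB
    set A : Mat := (B⁻¹)ᵀ with hA
    have hAu : IsUnit A.det := by
      rw [hA, Matrix.det_transpose]
      exact Matrix.isUnit_nonsing_inv_det B hB
    have hATB : ((Aᵀ)⁻¹ : Mat) = B := by
      rw [hA, Matrix.transpose_transpose, Matrix.nonsing_inv_nonsing_inv B hB]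
    have hmem : ((A, B) : Mat × Mat) ∈ Submodule.span K S := by
      rw [← hATB]
      exact Submodule.subset_span ⟨A, hAu, rfl⟩
    have := Submodule.sub_mem _ hmem (h1 A hAu)
    simpa using this
  -- conclude
  rw [eq_top_iff]
  rintro ⟨X, Y⟩ -
  have hX : ((X, 0) : Mat × Mat) ∈ Submodule.span K S := by
    have hXs := mem_span_isUnit_det K n X
    have hmap : Submodule.map (LinearMap.inl K Mat Mat)
        (Submodule.span K {A : Mat | IsUnit A.det}) ≤ Submodule.span K S := by
      rw [Submodule.map_span, Submodule.span_le]
      rintro - ⟨A, hAu, rfl⟩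
      exact h1 A hAu
    exact hmap ⟨X, hXs, rfl⟩
  have hY : ((0, Y) : Mat × Mat) ∈ Submodule.span K S := by
    have hYs := mem_span_isUnit_det K n Y
    have hmap : Submodule.map (LinearMap.inr K Mat Mat)
        (Submodule.span K {A : Mat | IsUnit A.det}) ≤ Submodule.span K S := by
      rw [Submodule.map_span, Submodule.span_le]
      rintro - ⟨B, hBu, rfl⟩
      exact h2 B hBu
    exact hmap ⟨Y, hYs, rfl⟩
  have := Submodule.add_mem _ hX hY
  simpa using this
end

section
/- Let p be a prime number with p ≡ 2 (mod 5) or p ≡ 3 (mod 5). Then for all v₀, v₁ ∈ F_p, the quintic polynomial P_{(v₀,v₁)} is a permutation polynomial of F_p, i.e. the map u ↦ P_{(v₀,v₁)}(u) is a bijection of F_p onto itself. -/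
/-- The fifth-power map is injective on a finite field whose unit group has order prime to 5. -/
lemma pow5_inj {F : Type*} [Field F] [Finite F] (h : ¬ (5 ∣ Nat.card F - 1)) :
    Function.Injective (fun x : F => x ^ 5) := by
  have hcop : (Nat.card Fˣ).Coprime 5 := by
    rw [Nat.card_units]
    exact (Nat.coprime_comm.mp ((Nat.prime_five).coprime_iff_not_dvd.mpr h))
  intro a b hab
  simp only at hab
  rcases eq_or_ne a 0 with rfl | ha
  · have : b ^ 5 = 0 := by simpa using hab.symm
    rw [pow_eq_zero_iff (by norm_num : 5 ≠ 0)] at this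
    exact this.symm
  rcases eq_or_ne b 0 with rfl | hb
  · have : a ^ 5 = 0 := by simpa using hab
    rw [pow_eq_zero_iff (by norm_num : 5 ≠ 0)] at this
    exact absurd this ha
  have : (powCoprime hcop) (Units.mk0 a ha) = (powCoprime hcop) (Units.mk0 b hb) := by
    ext
    simpa [powCoprime] using hab
  have := (powCoprime hcop).injective this
  simpa [Units.ext_iff] using this

/-- Every element of `F_p` has a square root in `F_{p^2}`. -/
lemma sqrt_exists (p : ℕ) [Fact p.Prime] (hodd : p ≠ 2) (a : ZMod p) :
    ∃ s : GaloisField p 2, s ^ 2 = algebraMap (ZMod p) (GaloisField p 2) a := by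
  set K := GaloisField p 2
  set f := algebraMap (ZMod p) K
  rcases eq_or_ne a 0 with rfl | ha
  · exact ⟨0, by simp⟩
  have hfa : f a ≠ 0 := by
    simpa using (RingHom.injective f).ne_iff.mpr ha
  have hK2 : ringChar K ≠ 2 := by
    have : CharP K p := inferInstance
    rw [ringChar.eq K p]
    exact hodd
  haveI : Fintype K := Fintype.ofFinite K
  have hcard : Fintype.card K = p ^ 2 := by
    rw [← Nat.card_eq_fintype_card]
    exact GaloisField.card p 2 (by norm_num)
  have hp2 : Odd p := (Fact.out : p.Prime).odd_of_ne_two hodd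
  obtain ⟨k, hk⟩ := hp2
  have hsq : (f a) ^ (Fintype.card K / 2) = 1 := by
    have he : Fintype.card K / 2 = (p - 1) * ((p + 1) / 2) := by
      rw [hcard]
      subst hk
      have h1 : (2 * k + 1) ^ 2 = 4 * (k * k) + 4 * k + 1 := by ring
      have h2 : (2 * k + 1 - 1) * ((2 * k + 1 + 1) / 2) = 2 * (k * k) + 2 * k := by
        have h3 : (2 * k + 1 + 1) / 2 = k + 1 := by omega
        have h4 : 2 * k + 1 - 1 = 2 * k := by omega
        rw [h3, h4]; ring
      omega
    rw [he, pow_mul]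
    have : (f a) ^ (p - 1) = 1 := by
      rw [← map_pow, ZMod.pow_card_sub_one_eq_one ha, map_one]
    rw [this, one_pow]
  obtain ⟨s, hs⟩ := (FiniteField.isSquare_iff hK2 hfa).mpr hsq
  exact ⟨s, by rw [sq]; exact hs.symm⟩

lemma zmod2_inj : Function.Injective (fun x : ZMod 2 => x ^ 5 - 5 * 1 * x ^ 3 + 5 * 1 ^ 2 * x) := by
  unfold Function.Injective
  decide

/-- The degree-5 Dickson polynomial is injective on `F_p` when `p ≡ 2, 3 (mod 5)`. -/
lemma dickson_inj (p : ℕ) [Fact p.Prime] (hp : p % 5 = 2 ∨ p % 5 = 3) (α : ZMod p) :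
    Function.Injective (fun x : ZMod p => x ^ 5 - 5 * α * x ^ 3 + 5 * α ^ 2 * x) := by
  have hppos : 2 ≤ p := (Fact.out : p.Prime).two_le
  rcases eq_or_ne α 0 with rfl | hα
  · -- the map is `x ↦ x ^ 5`
    have h5 : ¬ (5 ∣ Nat.card (ZMod p) - 1) := by
      rw [Nat.card_eq_fintype_card, ZMod.card]
      omega
    have := pow5_inj h5
    intro a b hab
    apply this
    simpa using hab
  by_cases hodd : p = 2
  · subst hodd
    fin_cases α
    · exact absurd rfl hα
    · exact zmod2_inj
  set K := GaloisField p 2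
  set f := algebraMap (ZMod p) K with hf
  have hfinj : Function.Injective f := RingHom.injective f
  have hfα : f α ≠ 0 := fun h => hα (hfinj (by simpa using h))
  have h2K : (2 : K) ≠ 0 := by
    have : CharP K p := inferInstance
    exact Ring.two_ne_zero (by rwa [ringChar.eq K p] : ringChar K ≠ 2)
  have h5K : Function.Injective (fun x : K => x ^ 5) := by
    apply pow5_inj
    rw [GaloisField.card p 2 (by norm_num)]
    have : p ^ 2 % 5 = 4 := by
      rw [Nat.pow_mod]
      rcases hp with h | h <;> rw [h]
    omega
  have param : ∀ x : ZMod p, ∃ y : K, y ≠ 0 ∧ f x = y + f α / y := by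
    intro x
    obtain ⟨s, hs⟩ := sqrt_exists p hodd (x ^ 2 - 4 * α)
    set y : K := (f x + s) / 2 with hy
    have hmul : y * (f x - y) = f α := by
      rw [hy]
      simp only [K] at *
      field_simp
      have hs' : s ^ 2 = f x ^ 2 - 4 * f α := by
        rw [hs]; push_cast [map_sub, map_mul, map_pow, map_ofNat]; ring
      linear_combination -hs'
    have hyne : y ≠ 0 := by
      intro h
      rw [h, zero_mul] at hmul
      exact hfα hmul.symm
    refine ⟨y, hyne, ?_⟩
    simp only [K] at *
    field_simp at hmul ⊢
    linear_combination hmul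
  intro x₁ x₂ hx
  simp only at hx
  obtain ⟨y₁, hy₁, hxy₁⟩ := param x₁
  obtain ⟨y₂, hy₂, hxy₂⟩ := param x₂
  have key : ∀ (x : ZMod p) (y : K), y ≠ 0 → f x = y + f α / y →
      f (x ^ 5 - 5 * α * x ^ 3 + 5 * α ^ 2 * x) = y ^ 5 + (f α) ^ 5 / y ^ 5 := by
    intro x y hy hxy
    push_cast [map_sub, map_add, map_mul, map_pow, map_ofNat]
    rw [hxy]
    simp only [K] at *
    field_simp
    ring
  have E : y₁ ^ 5 + (f α) ^ 5 / y₁ ^ 5 = y₂ ^ 5 + (f α) ^ 5 / y₂ ^ 5 := by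
    rw [← key x₁ y₁ hy₁ hxy₁, ← key x₂ y₂ hy₂ hxy₂, hx]
  have key2 : (y₁ ^ 5 - y₂ ^ 5) * (y₁ ^ 5 * y₂ ^ 5 - (f α) ^ 5) = 0 := by
    simp only [K] at *
    field_simp at E
    linear_combination E
  rcases mul_eq_zero.mp key2 with h | h
  · have : y₁ = y₂ := h5K (by simpa using sub_eq_zero.mp h)
    apply hfinj
    rw [hxy₁, hxy₂, this]
  · have hyy : y₁ * y₂ = f α := by
      have : (y₁ * y₂) ^ 5 = (f α) ^ 5 := by rw [mul_pow]; linear_combination h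
      exact h5K this
    apply hfinj
    rw [hxy₁, hxy₂, ← hyy]
    simp only [K] at *
    field_simp
    ring

/-- The quintic polynomial `P_{(v₀,v₁)}` from the proof of Lemma 6.4 of the paper,
defined over any field in which the displayed divisions by `5` and `25` make sense. -/
def Pquintic {K : Type*} [Field K] (v₀ v₁ u : K) : K :=
  u ^ 5 + (-v₀ + v₁) * u ^ 4
    + ((3 * v₀ ^ 2 - 6 * v₀ * v₁ - 2 * v₁ ^ 2) / 5) * u ^ 3
    + ((-v₀ ^ 3 + 3 * v₀ ^ 2 * v₁ - 2 * v₁ ^ 3) / 5) * u ^ 2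
    + ((v₀ ^ 4 - 4 * v₀ ^ 3 * v₁ + v₀ ^ 2 * v₁ ^ 2 + 6 * v₀ * v₁ ^ 3 + v₁ ^ 4) / 25) * u
    + (v₀ ^ 4 * v₁ + v₀ ^ 3 * v₁ ^ 2 + v₀ ^ 2 * v₁ ^ 3 + v₀ * v₁ ^ 4 + v₁ ^ 5) / 25

/-- `P_{(v₀,v₁)}` is a translated Dickson polynomial of degree 5. -/
lemma Pquintic_eq_dickson {K : Type*} [Field K] (h5 : (5 : K) ≠ 0) (v₀ v₁ u : K) :
    Pquintic v₀ v₁ u =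
      (u + (v₁ - v₀) / 5) ^ 5
        - 5 * ((4 * v₁ ^ 2 + 2 * v₀ * v₁ - v₀ ^ 2) / 25) * (u + (v₁ - v₀) / 5) ^ 3
        + 5 * ((4 * v₁ ^ 2 + 2 * v₀ * v₁ - v₀ ^ 2) / 25) ^ 2 * (u + (v₁ - v₀) / 5)
        + (11 * v₀ ^ 5 + 70 * v₀ ^ 4 * v₁ + 160 * v₀ ^ 3 * v₁ ^ 2 + 240 * v₀ ^ 2 * v₁ ^ 3
            + 80 * v₀ * v₁ ^ 4 + 64 * v₁ ^ 5) / 3125 := by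
  have e1 : (25 : K) = 5 ^ 2 := by norm_num
  have e2 : (3125 : K) = 5 ^ 5 := by norm_num
  set w := (5:K)⁻¹ with hwdef
  have hw : (5:K) * w = 1 := mul_inv_cancel₀ h5
  have d5 : ∀ x : K, x / 5 = x * w := fun x => div_eq_mul_inv x 5
  have d25 : ∀ x : K, x / 25 = x * w ^ 2 := fun x => by
    rw [e1, div_eq_mul_inv, inv_pow]
  have d3125 : ∀ x : K, x / 3125 = x * w ^ 5 := fun x => by
    rw [e2, div_eq_mul_inv, inv_pow]
  unfold Pquintic
  simp only [d5, d25, d3125]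
  linear_combination ((-1 : K) * v₁^5 * w^2 + (-5 : K) * v₁^5 * w^3 + (-25 : K) * v₁^5 * w^4 + (-1 : K) * v₀ * v₁^4 * w^2 + (-5 : K) * v₀ * v₁^4 * w^3 + (-25 : K) * v₀ * v₁^4 * w^4 + (-1 : K) * v₀^2 * v₁^3 * w^2 + (-5 : K) * v₀^2 * v₁^3 * w^3 + (-25 : K) * v₀^2 * v₁^3 * w^4 + (-1 : K) * v₀^3 * v₁^2 * w^2 + (-5 : K) * v₀^3 * v₁^2 * w^3 + (-25 : K) * v₀^3 * v₁^2 * w^4 + (-1 : K) * v₀^4 * v₁ * w^2 + (-5 : K) * v₀^4 * v₁ * w^3 + (-25 : K) * v₀^4 * v₁ * w^4 + (-1 : K) * u * v₁^4 * w^2 + (-5 : K) * u * v₁^4 * w^3 + (-6 : K) * u * v₀ * v₁^3 * w^2 + (-30 : K) * u * v₀ * v₁^3 * w^3 + (-1 : K) * u * v₀^2 * v₁^2 * w^2 + (-5 : K) * u * v₀^2 * v₁^2 * w^3 + (4 : K) * u * v₀^3 * v₁ * w^2 + (20 : K) * u * v₀^3 * v₁ * w^3 + (-1 : K) * u * v₀^4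 * w^2 + (-5 : K) * u * v₀^4 * w^3 + (2 : K) * u^2 * v₁^3 * w + (10 : K) * u^2 * v₁^3 * w^2 + (-3 : K) * u^2 * v₀^2 * v₁ * w + (-15 : K) * u^2 * v₀^2 * v₁ * w^2 + u^2 * v₀^3 * w + (5 : K) * u^2 * v₀^3 * w^2 + (2 : K) * u^3 * v₁^2 * w + (6 : K) * u^3 * v₀ * v₁ * w + (-3 : K) * u^3 * v₀^2 * w + (-1 : K) * u^4 * v₁ + u^4 * v₀) * hw

/-- **Sublemma 6.5 (perm_pol).** For a prime `p ≡ 2, 3 (mod 5)` and arbitrary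
`v₀, v₁ ∈ F_p`, the quintic `P_{(v₀,v₁)}` is a permutation polynomial of `F_p`. -/
theorem Pquintic_bijective (p : ℕ) [Fact p.Prime] (hp : p % 5 = 2 ∨ p % 5 = 3)
    (v₀ v₁ : ZMod p) :
    Function.Bijective (fun u : ZMod p => Pquintic v₀ v₁ u) := by
  have hp5 : p ≠ 5 := by rcases hp with h | h <;> omega
  have h5 : (5 : ZMod p) ≠ 0 := by
    intro h
    rw [show ((5 : ZMod p)) = ((5 : ℕ) : ZMod p) by norm_num,
      ZMod.natCast_eq_zero_iff] at h
    exact hp5 ((Nat.prime_dvd_prime_iff_eq (Fact.out) (by norm_num)).mp h)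
  set α := (4 * v₁ ^ 2 + 2 * v₀ * v₁ - v₀ ^ 2) / 25 with hα
  set a := (v₁ - v₀) / 5 with ha
  set c := (11 * v₀ ^ 5 + 70 * v₀ ^ 4 * v₁ + 160 * v₀ ^ 3 * v₁ ^ 2 + 240 * v₀ ^ 2 * v₁ ^ 3
      + 80 * v₀ * v₁ ^ 4 + 64 * v₁ ^ 5) / 3125 with hc
  have hfun : (fun u : ZMod p => Pquintic v₀ v₁ u)
      = (fun t => t + c) ∘ (fun t : ZMod p => t ^ 5 - 5 * α * t ^ 3 + 5 * α ^ 2 * t)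
          ∘ (fun u => u + a) := by
    funext u
    exact Pquintic_eq_dickson h5 v₀ v₁ u
  rw [hfun]
  exact ((Equiv.addRight c).bijective.comp
    (Finite.injective_iff_bijective.mp (dickson_inj p hp α))).comp
    (Equiv.addRight a).bijective
end

section
/- Let K be a field of characteristic different from 5 and v₀, v₁ ∈ K. Put α := (−v₀² + 2v₀v₁ + 4v₁²)/25 and C := P_{(v₀,v₁)}((v₀ − v₁)/5). Then for every u ∈ K one has P_{(v₀,v₁)}(u + (v₀ − v₁)/5) − C = u⁵ − 5αu³ + 5α²u. In other words, the normalised form of P_{(v₀,v₁)} is the Dickson polynomial g₅(u, α) = u⁵ − 5αu³ + 5α²u. -/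
/-- The computation in the proof of Sublemma 6.5 (perm_pol): over a field of characteristic
`≠ 5`, the normalised form of `P_{(v₀,v₁)}` is the Dickson polynomial
`g₅(u, α) = u⁵ − 5αu³ + 5α²u`, with `α = (−v₀² + 2v₀v₁ + 4v₁²)/25`. -/
theorem Pquintic_normalised_eq_dickson (K : Type*) [Field K] (hchar : ringChar K ≠ 5)
    (v₀ v₁ : K) (α C : K)
    (hα : α = (-v₀ ^ 2 + 2 * v₀ * v₁ + 4 * v₁ ^ 2) / 25)
    (hC : C = Pquintic v₀ v₁ ((v₀ - v₁) / 5)) :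
    ∀ u : K, Pquintic v₀ v₁ (u + (v₀ - v₁) / 5) - C
      = u ^ 5 - 5 * α * u ^ 3 + 5 * α ^ 2 * u := by
  intro u
  have h5 : (5 : K) ≠ 0 := by
    intro h
    have hd : ringChar K ∣ 5 := by
      have := (CharP.cast_eq_zero_iff K (ringChar K) 5).mpr
      exact (CharP.cast_eq_zero_iff K (ringChar K) 5).mp (by exact_mod_cast h)
    rcases (Nat.prime_five).eq_one_or_self_of_dvd _ hd with h1 | h1
    · exact CharP.ringChar_ne_one h1
    · exact hchar h1
  subst hα hC
  simp only [Pquintic]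
  have h25 : (25 : K) ≠ 0 := by
    intro h
    apply h5
    have : (25 : K) = 5 * 5 := by norm_num
    rw [this] at h
    exact (mul_self_eq_zero.mp h)
  have hbig : (152587890625 : K) ≠ 0 := by
    have : (152587890625 : K) = 5 ^ 16 := by norm_num
    rw [this]; exact pow_ne_zero _ h5
  simp only [show (25:K) = 5 ^ 2 from by norm_num]
  field_simp [hbig, h5, h25]
  have hD : ((5:K) ^ 5 * 5 ^ 4 * (5 * 5 ^ 3) * (5 * 5 ^ 2) * (5 ^ 2 * 5)) ≠ 0 := by
    apply_rules [mul_ne_zero, pow_ne_zero]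
  ring
end
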